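/- Let K be a field, let N ≤ SL₂(K) be the subgroup of monomial matrices, and for (α,β) ∈ K × K let u(α,β) = [[1, α],[β, 1+αβ]] ∈ SL₂(K). Then for all (α,β), (α',β') ∈ K × K the following are equivalent: (i) there exist n₁, n₂ ∈ N with n₁ · u(α,β) · n₂ = u(α',β') (i.e. u(α,β) and u(α',β') lie in the same double coset N g N); (ii) (α,β) and (α',β') are 𝒩-equivalent. -/

import Mathlib

open Matrix

/-- A matrix in `SL₂(K)` is monomial if it is diagonal or antidiagonal. -/
def IsMonomial {K : Type*} [Field K] (A : SpecialLinearGroup (Fin 2) K) : Prop :=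
  ((A : Matrix (Fin 2) (Fin 2) K) 0 1 = 0 ∧ (A : Matrix (Fin 2) (Fin 2) K) 1 0 = 0) ∨
  ((A : Matrix (Fin 2) (Fin 2) K) 0 0 = 0 ∧ (A : Matrix (Fin 2) (Fin 2) K) 1 1 = 0)

/-- `u(α,β) = [[1, α],[β, 1+αβ]] ∈ SL₂(K)`. -/
def uMat {K : Type*} [Field K] (p : K × K) : SpecialLinearGroup (Fin 2) K :=
  ⟨!![1, p.1; p.2, 1 + p.1 * p.2], by rw [Matrix.det_fin_two_of]; ring⟩

/-- The step relation generating the partial action of the group `𝒩` on `K × K`. -/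
def Rstep {K : Type*} [Field K] (p q : K × K) : Prop :=
  (∃ s : K, s ≠ 0 ∧ q = (s ^ 2 * p.1, s⁻¹ ^ 2 * p.2)) ∨
  (p.2 ≠ 0 ∧ q = (p.2⁻¹ * (1 + p.1 * p.2), -p.2)) ∨
  (p.1 ≠ 0 ∧ q = (-p.1⁻¹, p.1 * (1 + p.1 * p.2))) ∨
  (1 + p.1 * p.2 ≠ 0 ∧ q = (-p.2 * (1 + p.1 * p.2)⁻¹, -p.1 * (1 + p.1 * p.2)))

section Helpers

variable {K : Type*} [Field K]

lemma isMonomial_one : IsMonomial (1 : SpecialLinearGroup (Fin 2) K) := Or.inl (by simp)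

lemma isMonomial_mul {A B : SpecialLinearGroup (Fin 2) K} (hA : IsMonomial A) (hB : IsMonomial B) :
    IsMonomial (A * B) := by
  rcases hA with ⟨h1, h2⟩ | ⟨h1, h2⟩ <;> rcases hB with ⟨g1, g2⟩ | ⟨g1, g2⟩
  · exact Or.inl (by simp [Matrix.SpecialLinearGroup.coe_mul, Matrix.mul_apply, Fin.sum_univ_two, h1, h2, g1, g2])
  · exact Or.inr (by simp [Matrix.SpecialLinearGroup.coe_mul, Matrix.mul_apply, Fin.sum_univ_two, h1, h2, g1, g2])
  · exact Or.inr (by simp [Matrix.SpecialLinearGroup.coe_mul, Matrix.mul_apply, Fin.sum_univ_two, h1, h2, g1, g2])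
  · exact Or.inl (by simp [Matrix.SpecialLinearGroup.coe_mul, Matrix.mul_apply, Fin.sum_univ_two, h1, h2, g1, g2])

lemma isMonomial_inv {A : SpecialLinearGroup (Fin 2) K} (hA : IsMonomial A) : IsMonomial A⁻¹ := by
  rw [SpecialLinearGroup.SL2_inv_expl]
  rcases hA with ⟨h1, h2⟩ | ⟨h1, h2⟩
  · exact Or.inl (by simp [h1, h2])
  · exact Or.inr (by simp [h1, h2])

def Dmat (s : K) (hs : s ≠ 0) : SpecialLinearGroup (Fin 2) K :=
  ⟨!![s, 0; 0, s⁻¹], by rw [Matrix.det_fin_two_of]; field_simp; ring⟩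

def Wmat (t : K) (ht : t ≠ 0) : SpecialLinearGroup (Fin 2) K :=
  ⟨!![0, t; -t⁻¹, 0], by rw [Matrix.det_fin_two_of]; field_simp; ring⟩

lemma isMonomial_Dmat (s : K) (hs : s ≠ 0) : IsMonomial (Dmat s hs) := Or.inl ⟨rfl, rfl⟩
lemma isMonomial_Wmat (t : K) (ht : t ≠ 0) : IsMonomial (Wmat t ht) := Or.inr ⟨rfl, rfl⟩

def DC (p p' : K × K) : Prop :=
  ∃ n₁ n₂ : SpecialLinearGroup (Fin 2) K,
    IsMonomial n₁ ∧ IsMonomial n₂ ∧ n₁ * uMat p * n₂ = uMat p'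

lemma rstep_dc {p q : K × K} (h : Rstep p q) : DC p q := by
  obtain ⟨α, β⟩ := p
  rcases h with ⟨s, hs, rfl⟩ | ⟨hb, rfl⟩ | ⟨ha, rfl⟩ | ⟨hc, rfl⟩
  · refine ⟨Dmat s hs, Dmat s⁻¹ (inv_ne_zero hs), isMonomial_Dmat _ _, isMonomial_Dmat _ _, ?_⟩
    apply Subtype.ext
    simp only [Matrix.SpecialLinearGroup.coe_mul]
    simp only [Dmat, uMat]
    ext i j
    fin_cases i <;> fin_cases j
    all_goals try simp [Matrix.mul_apply, Fin.sum_univ_two]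
    · exact mul_inv_cancel₀ hs
    · ring
    · field_simp
    · field_simp
  · have hb' : β ≠ 0 := hb
    refine ⟨Wmat β⁻¹ (inv_ne_zero hb'), 1, isMonomial_Wmat _ _, Or.inl (by simp), ?_⟩
    apply Subtype.ext
    simp only [Matrix.SpecialLinearGroup.coe_mul]
    simp only [Wmat, uMat, mul_one]
    ext i j
    fin_cases i <;> fin_cases j
    all_goals try simp [Matrix.mul_apply, Fin.sum_univ_two]
    · exact inv_mul_cancel₀ hb'
    · linear_combination (1 + α * β) * (inv_mul_cancel₀ hb')
  · have ha' : α ≠ 0 := ha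
    refine ⟨Dmat (-α)⁻¹ (inv_ne_zero (neg_ne_zero.mpr ha')), Wmat 1 one_ne_zero,
      isMonomial_Dmat _ _, isMonomial_Wmat _ _, ?_⟩
    apply Subtype.ext
    simp only [Matrix.SpecialLinearGroup.coe_mul]
    simp only [Dmat, Wmat, uMat]
    ext i j
    fin_cases i <;> fin_cases j
    all_goals try simp [Matrix.mul_apply, Fin.sum_univ_two]
    · linear_combination inv_mul_cancel₀ (neg_ne_zero.mpr ha')
    · linear_combination (1 + α * β) * (inv_mul_cancel₀ ha')
  · have hc' : (1 : K) + α * β ≠ 0 := hc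
    have h2 : (-1 : K) - α * β ≠ 0 := fun h => hc' (by linear_combination -h)
    have h3 : (-1 : K) - β * α ≠ 0 := fun h => hc' (by linear_combination -h)
    refine ⟨Wmat (-(1 + α * β))⁻¹ (inv_ne_zero (neg_ne_zero.mpr hc')), Wmat 1 one_ne_zero,
      isMonomial_Wmat _ _, isMonomial_Wmat _ _, ?_⟩
    apply Subtype.ext
    simp only [Matrix.SpecialLinearGroup.coe_mul]
    simp only [Wmat, uMat]
    ext i j
    fin_cases i <;> fin_cases j
    all_goals try simp [Matrix.mul_apply, Fin.sum_univ_two]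
    · linear_combination mul_inv_cancel₀ h2
    · linear_combination (-β) * (mul_inv_cancel₀ h3) +
        (α*β^2*(1+α*β)⁻¹) * (mul_inv_cancel₀ h2) +
        (β + α*β^2*(-1-α*β)⁻¹) * (mul_inv_cancel₀ hc')
    · ring
    · linear_combination (-α*β) * (mul_inv_cancel₀ hc')

lemma dc_rstep {p p' : K × K} (h : DC p p') : Relation.EqvGen Rstep p p' := by
  obtain ⟨n₁, n₂, h₁, h₂, he⟩ := h
  obtain ⟨α, β⟩ := p
  obtain ⟨α', β'⟩ := p'
  have hm : (n₁ : Matrix (Fin 2) (Fin 2) K) * !![1,α;β,1+α*β] * (n₂ : Matrix (Fin 2) (Fin 2) K)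
      = !![1,α';β',1+α'*β'] := by
    have := congrArg (fun X : SpecialLinearGroup (Fin 2) K => (X : Matrix (Fin 2) (Fin 2) K)) he
    simp only [Matrix.SpecialLinearGroup.coe_mul] at this
    simpa [uMat] using this
  have detA := n₁.prop
  have detB := n₂.prop
  rw [Matrix.det_fin_two] at detA detB
  have h00 := congrFun (congrFun hm 0) 0
  have h01 := congrFun (congrFun hm 0) 1
  have h10 := congrFun (congrFun hm 1) 0
  rcases h₁ with ⟨hb1, hc1⟩ | ⟨ha1, hd1⟩ <;> rcases h₂ with ⟨hg2, hk2⟩ | ⟨he2, hf2⟩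
  · -- diag diag : gen1 with s = a
    simp only [hb1, hc1, hg2, hk2, mul_zero, zero_mul, sub_zero, mul_one] at detA detB
    simp [Matrix.mul_apply, Fin.sum_univ_two, hb1, hc1, hg2, hk2] at h00 h01 h10
    set a := (n₁ : Matrix (Fin 2) (Fin 2) K) 0 0
    have ha : a ≠ 0 := left_ne_zero_of_mul_eq_one detA
    have hd : (n₁ : Matrix (Fin 2) (Fin 2) K) 1 1 = a⁻¹ := eq_inv_of_mul_eq_one_right detA
    have hev : (n₂ : Matrix (Fin 2) (Fin 2) K) 0 0 = a⁻¹ := eq_inv_of_mul_eq_one_right h00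
    have hf : (n₂ : Matrix (Fin 2) (Fin 2) K) 1 1 = a := by
      linear_combination a * detB - (n₂ : Matrix (Fin 2) (Fin 2) K) 1 1 * h00
    refine Relation.EqvGen.rel _ _ (Or.inl ⟨a, ha, ?_⟩)
    have c1 : α' = a ^ 2 * α := by rw [← h01, hf]; ring
    have c2 : β' = a⁻¹ ^ 2 * β := by rw [← h10, hd, hev]; ring
    exact Prod.ext c1 c2
  · -- diag anti : gen3 then gen1 with s = a*α
    simp only [hb1, hc1, he2, hf2, mul_zero, zero_mul, sub_zero, zero_sub,
      mul_one] at detA detB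
    simp [Matrix.mul_apply, Fin.sum_univ_two, hb1, hc1, he2, hf2] at h00 h01 h10
    set a := (n₁ : Matrix (Fin 2) (Fin 2) K) 0 0
    set g := (n₂ : Matrix (Fin 2) (Fin 2) K) 0 1
    set k := (n₂ : Matrix (Fin 2) (Fin 2) K) 1 0
    have detB2 : g * k = -1 := by linear_combination -detB
    have ha : a ≠ 0 := fun hz => by simp [hz] at h00
    have hα : α ≠ 0 := fun hz => by simp [hz] at h00
    have hd : (n₁ : Matrix (Fin 2) (Fin 2) K) 1 1 = a⁻¹ := eq_inv_of_mul_eq_one_right detA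
    have hkv : k = a⁻¹ * α⁻¹ := by field_simp; linear_combination h00
    have hgv : g = -(a * α) := by
      have h7 : g * (a⁻¹ * α⁻¹) = -1 := hkv ▸ detB2
      field_simp at h7
      linear_combination h7
    refine Relation.EqvGen.trans _ _ _
      (Relation.EqvGen.rel _ _ (Or.inr (Or.inr (Or.inl ⟨hα, rfl⟩))))
      (Relation.EqvGen.rel _ _ (Or.inl ⟨a * α, mul_ne_zero ha hα, ?_⟩))
    have c1 : α' = (a * α) ^ 2 * (-α⁻¹) := by
      rw [← h01, hgv]
      linear_combination (a ^ 2 * α) * mul_inv_cancel₀ hα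
    have c2 : β' = ((a * α)⁻¹) ^ 2 * (α * (1 + α * β)) := by
      rw [← h10, hd, hkv, mul_inv]
      linear_combination (-(a⁻¹ ^ 2 * α⁻¹ * (1 + α * β))) * mul_inv_cancel₀ hα
    exact Prod.ext c1 c2
  · -- anti diag : gen2 then gen1 with s = f
    simp only [ha1, hd1, hg2, hk2, mul_zero, zero_mul, sub_zero, zero_sub,
      mul_one] at detA detB
    simp [Matrix.mul_apply, Fin.sum_univ_two, ha1, hd1, hg2, hk2] at h00 h01 h10
    set b := (n₁ : Matrix (Fin 2) (Fin 2) K) 0 1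
    set c := (n₁ : Matrix (Fin 2) (Fin 2) K) 1 0
    set f := (n₂ : Matrix (Fin 2) (Fin 2) K) 1 1
    set e := (n₂ : Matrix (Fin 2) (Fin 2) K) 0 0
    have detA2 : b * c = -1 := by linear_combination -detA
    have hβ : β ≠ 0 := fun hz => by simp [hz] at h00
    have hb : b ≠ 0 := fun hz => by simp [hz] at h00
    have hf0 : f ≠ 0 := right_ne_zero_of_mul_eq_one detB
    have he0 : e ≠ 0 := left_ne_zero_of_mul_eq_one detB
    have hfi : f⁻¹ = e := by field_simp; linear_combination -detB
    have hbv : b = β⁻¹ * f := by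
      field_simp
      linear_combination f * h00 - b * β * detB
    have hcv : c = -(β * e) := by
      have h6 : β⁻¹ * f * c = -1 := hbv ▸ detA2
      field_simp at h6
      linear_combination e * h6 - c * detB
    refine Relation.EqvGen.trans _ _ _
      (Relation.EqvGen.rel _ _ (Or.inr (Or.inl ⟨hβ, rfl⟩)))
      (Relation.EqvGen.rel _ _ (Or.inl ⟨f, hf0, ?_⟩))
    have c1 : α' = f ^ 2 * (β⁻¹ * (1 + α * β)) := by rw [← h01, hbv]; ring
    have c2 : β' = f⁻¹ ^ 2 * (-β) := by rw [hfi, ← h10, hcv]; ring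
    exact Prod.ext c1 c2
  · -- anti anti : gen4 then gen1 with s = g
    simp only [ha1, hd1, he2, hf2, mul_zero, zero_mul, sub_zero, zero_sub,
      mul_one] at detA detB
    simp [Matrix.mul_apply, Fin.sum_univ_two, ha1, hd1, he2, hf2] at h00 h01 h10
    set b := (n₁ : Matrix (Fin 2) (Fin 2) K) 0 1
    set c := (n₁ : Matrix (Fin 2) (Fin 2) K) 1 0
    set g := (n₂ : Matrix (Fin 2) (Fin 2) K) 0 1
    set k := (n₂ : Matrix (Fin 2) (Fin 2) K) 1 0
    have detA2 : b * c = -1 := by linear_combination -detA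
    have detB2 : g * k = -1 := by linear_combination -detB
    have hc0 : 1 + α * β ≠ 0 := fun hz => by simp [hz] at h00
    have hb0 : b ≠ 0 := fun hz => by simp [hz] at h00
    have hk0 : k ≠ 0 := fun hz => by simp [hz] at h00
    have hg0 : g ≠ 0 := fun hz => by rw [hz, zero_mul] at detB2; exact one_ne_zero (by linear_combination detB2)
    have hkv : k = -g⁻¹ := by field_simp; linear_combination detB2
    have hbv : b = -(g * (1 + α * β)⁻¹) := by
      field_simp
      linear_combination (-g) * h00 + b * (1 + α * β) * detB2
    have hcv : c = (1 + α * β) * g⁻¹ := by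
      have h8 : -(g * (1 + α * β)⁻¹) * c = -1 := hbv ▸ detA2
      field_simp at h8
      field_simp
      linear_combination -h8
    refine Relation.EqvGen.trans _ _ _
      (Relation.EqvGen.rel _ _ (Or.inr (Or.inr (Or.inr ⟨hc0, rfl⟩))))
      (Relation.EqvGen.rel _ _ (Or.inl ⟨g, hg0, ?_⟩))
    have c1 : α' = g ^ 2 * (-β * (1 + α * β)⁻¹) := by rw [← h01, hbv]; ring
    have c2 : β' = g⁻¹ ^ 2 * (-α * (1 + α * β)) := by rw [← h10, hcv, hkv]; ring
    exact Prod.ext c1 c2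

lemma dc_refl (p : K × K) : DC p p :=
  ⟨1, 1, isMonomial_one, isMonomial_one, by simp⟩

lemma dc_symm {p q : K × K} (h : DC p q) : DC q p := by
  obtain ⟨n₁, n₂, h₁, h₂, he⟩ := h
  exact ⟨n₁⁻¹, n₂⁻¹, isMonomial_inv h₁, isMonomial_inv h₂, by rw [← he]; group⟩

lemma dc_trans {p q r : K × K} (h : DC p q) (h' : DC q r) : DC p r := by
  obtain ⟨n₁, n₂, h₁, h₂, he⟩ := h
  obtain ⟨m₁, m₂, g₁, g₂, ge⟩ := h'
  exact ⟨m₁ * n₁, n₂ * m₂, isMonomial_mul g₁ h₁, isMonomial_mul h₂ g₂, by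
    rw [← ge, ← he]; group⟩

lemma eqvgen_dc {p q : K × K} (h : Relation.EqvGen Rstep p q) : DC p q := by
  induction h with
  | rel a b hab => exact rstep_dc hab
  | refl a => exact dc_refl a
  | symm a b _ ih => exact dc_symm ih
  | trans a b c _ _ ih1 ih2 => exact dc_trans ih1 ih2

end Helpers

/-- `u(α,β)` and `u(α',β')` lie in the same double coset `N g N` (where `N` is the
subgroup of monomial matrices) iff `(α,β)` and `(α',β')` are 𝒩-equivalent. -/
theorem double_coset_iff_N_equivalent {K : Type*} [Field K] (p p' : K × K) :
    (∃ n₁ n₂ : SpecialLinearGroup (Fin 2) K,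
        IsMonomial n₁ ∧ IsMonomial n₂ ∧ n₁ * uMat p * n₂ = uMat p') ↔
      Relation.EqvGen Rstep p p' :=
  ⟨fun h => dc_rstep h, fun h => eqvgen_dc h⟩
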